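/- Let q > 1 be a real number and Δ ∈ ℕ a fixed natural number. Then lim_{n→∞} (1/n) · log_q [n; n−Δ]_q = Δ, where [n; n−Δ]_q is the q-binomial coefficient. -/

import Mathlib

open Filter Topology

/-- The `q`-integer `[n]_q = (qⁿ − 1)/(q − 1)`. -/
noncomputable def qInt (q : ℝ) (n : ℕ) : ℝ := (q ^ n - 1) / (q - 1)

/-- The `q`-factorial `[n]_q! = ∏_{i=1}^n [i]_q`. -/
noncomputable def qFact (q : ℝ) (n : ℕ) : ℝ := ∏ i ∈ Finset.range n, qInt q (i + 1)

/-- The `q`-binomial coefficient `[n; k]_q = [n]_q!/([k]_q!·[n−k]_q!)`. -/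
noncomputable def qBinom (q : ℝ) (n k : ℕ) : ℝ := qFact q n / (qFact q k * qFact q (n - k))

lemma qInt_pos {q : ℝ} (hq : 1 < q) (m : ℕ) : 0 < qInt q (m + 1) := by
  have h1 : (1:ℝ) < q ^ (m + 1) := one_lt_pow₀ hq (Nat.succ_ne_zero m)
  exact div_pos (by linarith) (by linarith)

lemma qFact_pos {q : ℝ} (hq : 1 < q) (n : ℕ) : 0 < qFact q n :=
  Finset.prod_pos fun i _ => qInt_pos hq i

lemma log_qInt_lower {q : ℝ} (hq : 1 < q) (i : ℕ) :
    (i : ℝ) * Real.log q ≤ Real.log (qInt q (i + 1)) := by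
  have hqpos : (0:ℝ) < q := by linarith
  have hpow : (0:ℝ) < q ^ i := pow_pos hqpos i
  have h1 : q ^ i ≤ qInt q (i + 1) := by
    rw [qInt, le_div_iff₀ (by linarith : (0:ℝ) < q - 1)]
    have : (1:ℝ) ≤ q ^ i := one_le_pow₀ hq.le
    have : q ^ (i + 1) = q ^ i * q := by ring
    nlinarith [(one_le_pow₀ hq.le : (1:ℝ) ≤ q ^ i)]
  calc (i : ℝ) * Real.log q = Real.log (q ^ i) := by rw [Real.log_pow]
    _ ≤ Real.log (qInt q (i + 1)) := Real.log_le_log hpow h1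

lemma log_qInt_upper {q : ℝ} (hq : 1 < q) (i : ℕ) :
    Real.log (qInt q (i + 1)) ≤ ((i : ℝ) + 1) * Real.log q - Real.log (q - 1) := by
  have hqpos : (0:ℝ) < q := by linarith
  have h1 : (1:ℝ) < q ^ (i + 1) := one_lt_pow₀ hq (Nat.succ_ne_zero i)
  have : qInt q (i + 1) ≤ q ^ (i + 1) / (q - 1) := by
    apply div_le_div_of_nonneg_right ?_ (by linarith)
    · linarith
  calc Real.log (qInt q (i + 1)) ≤ Real.log (q ^ (i + 1) / (q - 1)) :=
        Real.log_le_log (qInt_pos hq i) this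
    _ = ((i : ℝ) + 1) * Real.log q - Real.log (q - 1) := by
        rw [Real.log_div (by positivity) (by linarith), Real.log_pow]
        push_cast; ring

lemma log_qBinom_eq {q : ℝ} (hq : 1 < q) {Δ n : ℕ} (h : Δ ≤ n) :
    Real.log (qBinom q n (n - Δ)) =
      (∑ i ∈ Finset.Ico (n - Δ) n, Real.log (qInt q (i + 1))) - Real.log (qFact q Δ) := by
  have hsub : n - (n - Δ) = Δ := Nat.sub_sub_self h
  have hsplit : qFact q n = qFact q (n - Δ) * ∏ i ∈ Finset.Ico (n - Δ) n, qInt q (i + 1) := by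
    rw [qFact, ← Finset.prod_range_mul_prod_Ico _ (Nat.sub_le n Δ)]; rfl
  have hP : (0:ℝ) < ∏ i ∈ Finset.Ico (n - Δ) n, qInt q (i + 1) :=
    Finset.prod_pos fun i _ => qInt_pos hq i
  have hb : qBinom q n (n - Δ) = (∏ i ∈ Finset.Ico (n - Δ) n, qInt q (i + 1)) / qFact q Δ := by
    rw [qBinom, hsub, hsplit, mul_div_mul_left _ _ (qFact_pos hq (n - Δ)).ne']
  rw [hb, Real.log_div hP.ne' (qFact_pos hq Δ).ne', Real.log_prod]
  exact fun i _ => (qInt_pos hq i).ne'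

/-- For fixed `Δ ∈ ℕ` and real `q > 1`,
`(1/n) · log_q [n; n−Δ]_q → Δ` as `n → ∞`. -/
theorem qBinom_codim_log_asymptotics (q : ℝ) (hq : 1 < q) (Δ : ℕ) :
    Tendsto (fun n : ℕ =>
        (1 / (n : ℝ)) * (Real.log (qBinom q n (n - Δ)) / Real.log q))
      atTop (𝓝 (Δ : ℝ)) := by
  set L := Real.log q with hL
  have hLpos : 0 < L := Real.log_pos hq
  set C := Real.log (qFact q Δ) with hC
  set E := Real.log (q - 1) with hE
  set B : ℝ := (Δ : ℝ) ^ 2 + C / L with hB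
  set K : ℝ := (-(Δ : ℝ) * E - C) / L with hK
  have hlo : Tendsto (fun n : ℕ => (Δ : ℝ) - B / n) atTop (𝓝 (Δ : ℝ)) := by
    simpa using (tendsto_const_div_atTop_nhds_zero_nat B).const_sub (Δ : ℝ)
  have hhi : Tendsto (fun n : ℕ => (Δ : ℝ) + K / n) atTop (𝓝 (Δ : ℝ)) := by
    simpa using (tendsto_const_div_atTop_nhds_zero_nat K).const_add (Δ : ℝ)
  apply tendsto_of_tendsto_of_tendsto_of_le_of_le' hlo hhi
  · filter_upwards [eventually_ge_atTop (Δ + 1)] with n hn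
    have hΔn : Δ ≤ n := by omega
    have hn1 : 1 ≤ n := by omega
    have hnpos : (0:ℝ) < n := by exact_mod_cast hn1
    have hcard : (Finset.Ico (n - Δ) n).card = Δ := by
      rw [Nat.card_Ico]; omega
    have hcast : ((n - Δ : ℕ) : ℝ) = (n : ℝ) - Δ := by
      push_cast [hΔn]; ring
    have hS : (Δ : ℝ) * (((n : ℝ) - Δ) * L) ≤
        ∑ i ∈ Finset.Ico (n - Δ) n, Real.log (qInt q (i + 1)) := by
      calc (Δ : ℝ) * (((n : ℝ) - Δ) * L)
          = ∑ _i ∈ Finset.Ico (n - Δ) n, ((n : ℝ) - Δ) * L := by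
            rw [Finset.sum_const, hcard, nsmul_eq_mul]
        _ ≤ ∑ i ∈ Finset.Ico (n - Δ) n, Real.log (qInt q (i + 1)) := by
            apply Finset.sum_le_sum
            intro i hi
            have hi' : n - Δ ≤ i := (Finset.mem_Ico.mp hi).1
            have : ((n : ℝ) - Δ) ≤ (i : ℝ) := by
              rw [← hcast]; exact_mod_cast hi'
            calc ((n : ℝ) - Δ) * L ≤ (i : ℝ) * L := by nlinarith
              _ ≤ Real.log (qInt q (i + 1)) := log_qInt_lower hq i
    rw [log_qBinom_eq hq hΔn, div_mul_div_comm, one_mul, mul_comm (n:ℝ) L]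
    rw [le_div_iff₀ (by positivity)]
    have hBL : B * L = (Δ : ℝ) ^ 2 * L + C := by
      rw [hB, add_mul, div_mul_cancel₀ C hLpos.ne']
    have : ((Δ : ℝ) - B / n) * (L * n) = (Δ : ℝ) * n * L - B * L := by
      field_simp
    rw [this, hBL]
    nlinarith [hS]
  · filter_upwards [eventually_ge_atTop (Δ + 1)] with n hn
    have hΔn : Δ ≤ n := by omega
    have hn1 : 1 ≤ n := by omega
    have hnpos : (0:ℝ) < n := by exact_mod_cast hn1
    have hcard : (Finset.Ico (n - Δ) n).card = Δ := by
      rw [Nat.card_Ico]; omega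
    have hS : ∑ i ∈ Finset.Ico (n - Δ) n, Real.log (qInt q (i + 1)) ≤
        (Δ : ℝ) * ((n : ℝ) * L - E) := by
      calc ∑ i ∈ Finset.Ico (n - Δ) n, Real.log (qInt q (i + 1))
          ≤ ∑ _i ∈ Finset.Ico (n - Δ) n, ((n : ℝ) * L - E) := by
            apply Finset.sum_le_sum
            intro i hi
            have hi' : i < n := (Finset.mem_Ico.mp hi).2
            have hle : ((i : ℝ) + 1) ≤ (n : ℝ) := by exact_mod_cast hi'
            calc Real.log (qInt q (i + 1)) ≤ ((i : ℝ) + 1) * L - E := log_qInt_upper hq i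
              _ ≤ (n : ℝ) * L - E := by nlinarith
        _ = (Δ : ℝ) * ((n : ℝ) * L - E) := by
            rw [Finset.sum_const, hcard, nsmul_eq_mul]
    rw [log_qBinom_eq hq hΔn, div_mul_div_comm, one_mul, mul_comm (n:ℝ) L]
    rw [div_le_iff₀ (by positivity)]
    have hKL : K * L = -(Δ : ℝ) * E - C := by
      rw [hK, div_mul_cancel₀ _ hLpos.ne']
    have : ((Δ : ℝ) + K / n) * (L * n) = (Δ : ℝ) * n * L + K * L := by
      field_simp
    rw [this, hKL]
    nlinarith [hS]
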